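/- At any KKT point, the auxiliary variables enforce truncation: Let δ ∈ (0,1) and let (y,z) ∈ [0,1]^{3n−4} be a KKT point of the polynomial p constructed from the truncated-linear program. Then for every i ∈ {3,…,n}: trunc(Σ_{j<i} a_{ij} y_j + c_i) = Σ_{j<i} a_{ij} y_j + c_i − K z_i^+ + K z_i^−. -/

import Mathlib

noncomputable section

/-- Truncation to the unit interval. -/
def trunc (z : ℝ) : ℝ := min 1 (max 0 z)

/-- The term `q_i` of the quadratic polynomial, implementing the `i`-th gate. -/
def qval (K : ℝ) (a : ℕ → ℕ → ℝ) (c : ℕ → ℝ) (i : ℕ) (y zp zm : ℕ → ℝ) : ℝ :=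
  (y i + K * zp i - K * zm i - (∑ j ∈ Finset.Ico 1 i, a i j * y j) - c i) ^ 2
    + 2 * K ^ 2 * zp i * zm i + 2 * K * zp i * (1 - y i) + 2 * K * zm i * y i

/-- The quadratic polynomial `p(y,z) = δ^{n+1} y_n + Σ_{i=3}^n δ^i q_i(y,z)`. -/
def pval (n : ℕ) (K δ : ℝ) (a : ℕ → ℕ → ℝ) (c : ℕ → ℝ) (y zp zm : ℕ → ℝ) : ℝ :=
  δ ^ (n + 1) * y n + ∑ i ∈ Finset.Icc 3 n, δ ^ i * qval K a c i y zp zm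

/-- The partial derivative `∂p/∂y_k`. -/
def dpy (n : ℕ) (K δ : ℝ) (a : ℕ → ℕ → ℝ) (c : ℕ → ℝ) (k : ℕ) (y zp zm : ℕ → ℝ) : ℝ :=
  deriv (fun t => pval n K δ a c (Function.update y k t) zp zm) (y k)

/-- The partial derivative `∂p/∂z_k⁺`. -/
def dpzp (n : ℕ) (K δ : ℝ) (a : ℕ → ℕ → ℝ) (c : ℕ → ℝ) (k : ℕ) (y zp zm : ℕ → ℝ) : ℝ :=
  deriv (fun t => pval n K δ a c y (Function.update zp k t) zm) (zp k)

/-- The partial derivative `∂p/∂z_k⁻`. -/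
def dpzm (n : ℕ) (K δ : ℝ) (a : ℕ → ℕ → ℝ) (c : ℕ → ℝ) (k : ℕ) (y zp zm : ℕ → ℝ) : ℝ :=
  deriv (fun t => pval n K δ a c y zp (Function.update zm k t)) (zm k)

/-- `(y, z⁺, z⁻) ∈ [0,1]^{3n−4}` is a KKT point of the minimization of `p` over the box. -/
def IsKKT (n : ℕ) (K δ : ℝ) (a : ℕ → ℕ → ℝ) (c : ℕ → ℝ) (y zp zm : ℕ → ℝ) : Prop :=
  (∀ i, 1 ≤ i → i ≤ n → y i ∈ Set.Icc (0 : ℝ) 1) ∧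
  (∀ i, 3 ≤ i → i ≤ n → zp i ∈ Set.Icc (0 : ℝ) 1 ∧ zm i ∈ Set.Icc (0 : ℝ) 1) ∧
  (∀ i, 1 ≤ i → i ≤ n →
    (0 < y i → dpy n K δ a c i y zp zm ≤ 0) ∧ (y i < 1 → 0 ≤ dpy n K δ a c i y zp zm)) ∧
  (∀ i, 3 ≤ i → i ≤ n →
    ((0 < zp i → dpzp n K δ a c i y zp zm ≤ 0) ∧ (zp i < 1 → 0 ≤ dpzp n K δ a c i y zp zm)) ∧
    ((0 < zm i → dpzm n K δ a c i y zp zm ≤ 0) ∧ (zm i < 1 → 0 ≤ dpzm n K δ a c i y zp zm)))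

lemma deriv_quad (A B C x : ℝ) : deriv (fun t => A * t ^ 2 + B * t + C) x = 2 * A * x + B := by
  have h1 : HasDerivAt (fun t : ℝ => t ^ 2) (2 * x) x := by
    simpa using hasDerivAt_pow 2 x
  have h : HasDerivAt (fun t : ℝ => A * t ^ 2 + B * t + C) (A * (2 * x) + B * 1) x :=
    ((h1.const_mul A).add ((hasDerivAt_id x).const_mul B)).add_const C
  rw [h.deriv]; ring

lemma dpzp_eq (n : ℕ) (K δ : ℝ) (a : ℕ → ℕ → ℝ) (c : ℕ → ℝ) (y zp zm : ℕ → ℝ) (k : ℕ)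
    (hk : k ∈ Finset.Icc 3 n) :
    dpzp n K δ a c k y zp zm
      = 2 * K * δ ^ k * (1 + K * zp k - (∑ j ∈ Finset.Ico 1 k, a k j * y j) - c k) := by
  have hfun : (fun t => pval n K δ a c y (Function.update zp k t) zm)
      = fun t => (δ ^ k * K ^ 2) * t ^ 2
          + (δ ^ k * (2 * K * (y k - K * zm k - (∑ j ∈ Finset.Ico 1 k, a k j * y j) - c k)
              + 2 * K ^ 2 * zm k + 2 * K * (1 - y k))) * t
          + (δ ^ (n + 1) * y n
              + (∑ i ∈ (Finset.Icc 3 n).erase k, δ ^ i * qval K a c i y zp zm)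
              + δ ^ k * ((y k - K * zm k - (∑ j ∈ Finset.Ico 1 k, a k j * y j) - c k) ^ 2
                  + 2 * K * zm k * y k)) := by
    funext t
    have hsplit : ∑ i ∈ Finset.Icc 3 n, δ ^ i * qval K a c i y (Function.update zp k t) zm
        = δ ^ k * qval K a c k y (Function.update zp k t) zm
          + ∑ i ∈ (Finset.Icc 3 n).erase k, δ ^ i * qval K a c i y (Function.update zp k t) zm :=
      (Finset.add_sum_erase _ _ hk).symm
    have herase : ∑ i ∈ (Finset.Icc 3 n).erase k, δ ^ i * qval K a c i y (Function.update zp k t) zm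
        = ∑ i ∈ (Finset.Icc 3 n).erase k, δ ^ i * qval K a c i y zp zm :=
      Finset.sum_congr rfl fun i hi => by
        have hne : i ≠ k := Finset.ne_of_mem_erase hi
        simp [qval, Function.update_of_ne hne]
    simp only [pval]
    rw [hsplit, herase]
    simp only [qval, Function.update_self]
    ring
  rw [dpzp, hfun, deriv_quad]
  ring

lemma dpzm_eq (n : ℕ) (K δ : ℝ) (a : ℕ → ℕ → ℝ) (c : ℕ → ℝ) (y zp zm : ℕ → ℝ) (k : ℕ)
    (hk : k ∈ Finset.Icc 3 n) :
    dpzm n K δ a c k y zp zm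
      = 2 * K * δ ^ k * (K * zm k + (∑ j ∈ Finset.Ico 1 k, a k j * y j) + c k) := by
  have hfun : (fun t => pval n K δ a c y zp (Function.update zm k t))
      = fun t => (δ ^ k * K ^ 2) * t ^ 2
          + (δ ^ k * (-(2 * K * (y k + K * zp k - (∑ j ∈ Finset.Ico 1 k, a k j * y j) - c k))
              + 2 * K ^ 2 * zp k + 2 * K * y k)) * t
          + (δ ^ (n + 1) * y n
              + (∑ i ∈ (Finset.Icc 3 n).erase k, δ ^ i * qval K a c i y zp zm)
              + δ ^ k * ((y k + K * zp k - (∑ j ∈ Finset.Ico 1 k, a k j * y j) - c k) ^ 2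
                  + 2 * K * zp k * (1 - y k))) := by
    funext t
    have hsplit : ∑ i ∈ Finset.Icc 3 n, δ ^ i * qval K a c i y zp (Function.update zm k t)
        = δ ^ k * qval K a c k y zp (Function.update zm k t)
          + ∑ i ∈ (Finset.Icc 3 n).erase k, δ ^ i * qval K a c i y zp (Function.update zm k t) :=
      (Finset.add_sum_erase _ _ hk).symm
    have herase : ∑ i ∈ (Finset.Icc 3 n).erase k, δ ^ i * qval K a c i y zp (Function.update zm k t)
        = ∑ i ∈ (Finset.Icc 3 n).erase k, δ ^ i * qval K a c i y zp zm :=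
      Finset.sum_congr rfl fun i hi => by
        have hne : i ≠ k := Finset.ne_of_mem_erase hi
        simp [qval, Function.update_of_ne hne]
    simp only [pval]
    rw [hsplit, herase]
    simp only [qval, Function.update_self]
    ring
  rw [dpzm, hfun, deriv_quad]
  ring

lemma nonpos_of_pos_mul {c x : ℝ} (hc : 0 < c) (h : c * x ≤ 0) : x ≤ 0 := by
  by_contra hx
  push_neg at hx
  exact absurd h (not_le.mpr (mul_pos hc hx))

lemma nonneg_of_pos_mul {c x : ℝ} (hc : 0 < c) (h : 0 ≤ c * x) : 0 ≤ x := by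
  by_contra hx
  push_neg at hx
  exact absurd h (not_le.mpr (mul_neg_of_pos_of_neg hc hx))

/-- At any KKT point, the auxiliary variables enforce truncation. -/
theorem kkt_aux_truncation (n : ℕ) (hn : 3 ≤ n) (a : ℕ → ℕ → ℝ) (c : ℕ → ℝ)
    (K : ℝ) (hK1 : 1 ≤ K)
    (hK : ∀ i, 3 ≤ i → i ≤ n → (∑ j ∈ Finset.Ico 1 i, |a i j|) + |c i| ≤ K)
    (δ : ℝ) (hδ : δ ∈ Set.Ioo (0 : ℝ) 1)
    (y zp zm : ℕ → ℝ) (hkkt : IsKKT n K δ a c y zp zm) :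
    ∀ i, 3 ≤ i → i ≤ n →
      trunc ((∑ j ∈ Finset.Ico 1 i, a i j * y j) + c i)
        = (∑ j ∈ Finset.Ico 1 i, a i j * y j) + c i - K * zp i + K * zm i := by
  intro i h3 hin
  have hmem : i ∈ Finset.Icc 3 n := Finset.mem_Icc.mpr ⟨h3, hin⟩
  -- bound |sum + c i| ≤ K
  have hSbound : |∑ j ∈ Finset.Ico 1 i, a i j * y j| ≤ ∑ j ∈ Finset.Ico 1 i, |a i j| := by
    refine (Finset.abs_sum_le_sum_abs _ _).trans (Finset.sum_le_sum fun j hj => ?_)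
    have hj' := Finset.mem_Ico.mp hj
    have hy := hkkt.1 j hj'.1 (le_trans (le_of_lt hj'.2) hin)
    have hyabs : |y j| ≤ 1 := abs_le.mpr ⟨by linarith [hy.1], hy.2⟩
    calc |a i j * y j| = |a i j| * |y j| := abs_mul _ _
      _ ≤ |a i j| * 1 := mul_le_mul_of_nonneg_left hyabs (abs_nonneg _)
      _ = |a i j| := mul_one _
  obtain ⟨s, hs_def⟩ : ∃ s : ℝ, s = (∑ j ∈ Finset.Ico 1 i, a i j * y j) + c i := ⟨_, rfl⟩
  rw [← hs_def]
  have hsK : |s| ≤ K := by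
    rw [hs_def]
    calc |(∑ j ∈ Finset.Ico 1 i, a i j * y j) + c i|
        ≤ |∑ j ∈ Finset.Ico 1 i, a i j * y j| + |c i| := abs_add_le _ _
      _ ≤ (∑ j ∈ Finset.Ico 1 i, |a i j|) + |c i| := by linarith
      _ ≤ K := hK i h3 hin
  have hsle : s ≤ K := (abs_le.mp hsK).2
  have hsge : -K ≤ s := (abs_le.mp hsK).1
  have hz := hkkt.2.1 i h3 hin
  have hP0 : (0:ℝ) ≤ zp i := hz.1.1
  have hP1 : zp i ≤ 1 := hz.1.2
  have hM0 : (0:ℝ) ≤ zm i := hz.2.1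
  have hM1 : zm i ≤ 1 := hz.2.2
  have hkkt' := hkkt.2.2.2 i h3 hin
  have hKpos : (0:ℝ) < K := lt_of_lt_of_le one_pos hK1
  have hpos : (0:ℝ) < 2 * K * δ ^ i :=
    mul_pos (by linarith) (pow_pos hδ.1 i)
  -- translated sign conditions
  have hA : 0 < zp i → 1 + K * zp i ≤ s := by
    intro h
    have h1 := hkkt'.1.1 h
    rw [dpzp_eq n K δ a c y zp zm i hmem] at h1
    have h2 := nonpos_of_pos_mul hpos h1
    linarith [hs_def.ge, hs_def.le]
  have hB : zp i < 1 → s ≤ 1 + K * zp i := by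
    intro h
    have h1 := hkkt'.1.2 h
    rw [dpzp_eq n K δ a c y zp zm i hmem] at h1
    have h2 := nonneg_of_pos_mul hpos h1
    linarith [hs_def.ge, hs_def.le]
  have hC : 0 < zm i → s ≤ -(K * zm i) := by
    intro h
    have h1 := hkkt'.2.1 h
    rw [dpzm_eq n K δ a c y zp zm i hmem] at h1
    have h2 := nonpos_of_pos_mul hpos h1
    linarith [hs_def.ge, hs_def.le]
  have hD : zm i < 1 → -(K * zm i) ≤ s := by
    intro h
    have h1 := hkkt'.2.2 h
    rw [dpzm_eq n K δ a c y zp zm i hmem] at h1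
    have h2 := nonneg_of_pos_mul hpos h1
    linarith [hs_def.ge, hs_def.le]
  have hKzpnn : 0 ≤ K * zp i := mul_nonneg hKpos.le hP0
  have hKzmnn : 0 ≤ K * zm i := mul_nonneg hKpos.le hM0
  rcases eq_or_lt_of_le hP0 with hP | hP
  · have hKzp : K * zp i = 0 := by rw [← hP, mul_zero]
    rcases eq_or_lt_of_le hM0 with hM | hM
    · -- zp = 0, zm = 0
      have hKzm : K * zm i = 0 := by rw [← hM, mul_zero]
      have h1 : s ≤ 1 := by have := hB (by rw [← hP]; norm_num); linarith
      have h0 : 0 ≤ s := by have := hD (by rw [← hM]; norm_num); linarith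
      rw [trunc, max_eq_right h0, min_eq_right h1]
      linarith
    · -- zm > 0, zp = 0
      have hs0 : s ≤ -(K * zm i) := hC hM
      have hKzmpos : 0 < K * zm i := mul_pos hKpos hM
      have hsneg : s ≤ 0 := by linarith
      have heq : s + K * zm i = 0 := by
        rcases eq_or_lt_of_le hM1 with hM1' | hM1'
        · rw [hM1', mul_one] at hs0 ⊢
          linarith
        · have := hD hM1'
          linarith
      rw [trunc, max_eq_left hsneg, min_eq_right (by norm_num : (0:ℝ) ≤ 1)]
      linarith
  · -- zp > 0
    have hKzppos : 0 < K * zp i := mul_pos hKpos hP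
    rcases eq_or_lt_of_le hM0 with hM | hM
    · -- zm = 0
      have hKzm : K * zm i = 0 := by rw [← hM, mul_zero]
      have hs1 : 1 + K * zp i ≤ s := hA hP
      have hPlt : zp i < 1 := by
        by_contra h
        push_neg at h
        have hP1' : zp i = 1 := le_antisymm hP1 h
        rw [hP1', mul_one] at hs1
        linarith
      have hs2 : s ≤ 1 + K * zp i := hB hPlt
      rw [trunc, max_eq_right (by linarith : (0:ℝ) ≤ s), min_eq_left (by linarith : (1:ℝ) ≤ s)]
      linarith
    · -- both positive: contradiction
      exfalso
      have h1 := hA hP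
      have h2 := hC hM
      have hKzmpos : 0 < K * zm i := mul_pos hKpos hM
      linarith
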